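/- If a simple graph G has a unique Sachs subgraph S and S is not a perfect matching (i.e., S contains a cycle), then there exists a vertex i of G such that the diagonal entry (A⁻¹)_{ii} of the inverse adjacency matrix of any signing (G,σ) has absolute value 1/2; in particular, the inverse of (G,σ) is neither integral nor simple. -/

import Mathlib

open scoped Classical

/-- Degree of a vertex in a simple graph (as a cardinality, avoiding decidability). -/
noncomputable def sachsDeg {n : ℕ} (H : SimpleGraph (Fin n)) (v : Fin n) : ℕ :=
  Nat.card {w // H.Adj v w}

/-- `H` is a Sachs subgraph of the simple graph `G`: a spanning subgraph all of whose
components are `K₂`'s or cycles. -/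
def IsSachsSubgraph {n : ℕ} (G H : SimpleGraph (Fin n)) : Prop :=
  H ≤ G ∧ (∀ v, sachsDeg H v = 1 ∨ sachsDeg H v = 2) ∧
    ∀ u v, H.Adj u v → ¬(sachsDeg H u = 1 ∧ sachsDeg H v = 2)

theorem Equiv.Perm.inv_apply_self {α : Type*} (f : Equiv.Perm α) (x : α) : f⁻¹ (f x) = x :=
  f.symm_apply_apply x

theorem Equiv.Perm.apply_inv_self {α : Type*} (f : Equiv.Perm α) (x : α) : f (f⁻¹ x) = x :=
  f.apply_symm_apply x

namespace SachsAux

open Equiv Matrix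

variable {n : ℕ}

lemma sachsDeg_eq_ncard (H : SimpleGraph (Fin n)) (v : Fin n) :
    sachsDeg H v = {w | H.Adj v w}.ncard := by
  rw [sachsDeg, ← Nat.card_coe_set_eq]
  rfl

lemma sachsDeg_of_pair {H : SimpleGraph (Fin n)} {v a b : Fin n}
    (hset : {w | H.Adj v w} = {a, b}) :
    sachsDeg H v = if a = b then 1 else 2 := by
  rw [sachsDeg_eq_ncard, hset]
  split
  · rename_i h
    subst h
    simp
  · exact Set.ncard_pair ‹_›

def permGraph (π : Equiv.Perm (Fin n)) : SimpleGraph (Fin n) :=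
  SimpleGraph.fromRel (fun u v => π u = v)

lemma permGraph_adj {π : Equiv.Perm (Fin n)} {u v : Fin n} :
    (permGraph π).Adj u v ↔ u ≠ v ∧ (π u = v ∨ π v = u) :=
  SimpleGraph.fromRel_adj _ _ _

lemma permGraph_nbr {π : Equiv.Perm (Fin n)} (hfp : ∀ v, π v ≠ v) (v : Fin n) :
    {w | (permGraph π).Adj v w} = {π v, π⁻¹ v} := by
  ext w
  simp only [Set.mem_setOf_eq, permGraph_adj, Set.mem_insert_iff, Set.mem_singleton_iff]
  constructor
  · rintro ⟨hne, h | h⟩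
    · exact Or.inl h.symm
    · right
      rw [← h, Equiv.Perm.inv_apply_self]
  · rintro (rfl | rfl)
    · exact ⟨Ne.symm (hfp v), Or.inl rfl⟩
    · refine ⟨?_, Or.inr (Equiv.Perm.apply_inv_self _ _)⟩
      intro hh
      apply hfp v
      conv_lhs => rw [hh]
      exact Equiv.Perm.apply_inv_self _ _
  
lemma sachsDeg_permGraph {π : Equiv.Perm (Fin n)} (hfp : ∀ v, π v ≠ v) (v : Fin n) :
    sachsDeg (permGraph π) v = if π v = π⁻¹ v then 1 else 2 :=
  sachsDeg_of_pair (permGraph_nbr hfp v)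

lemma isSachs_permGraph {G : SimpleGraph (Fin n)} {π : Equiv.Perm (Fin n)}
    (hgood : ∀ v, G.Adj v (π v)) : IsSachsSubgraph G (permGraph π) := by
  have hfp : ∀ v, π v ≠ v := fun v => Ne.symm (G.ne_of_adj (hgood v))
  refine ⟨?_, ?_, ?_⟩
  · intro u v h
    rcases permGraph_adj.mp h with ⟨hne, h | h⟩
    · rw [← h]; exact hgood u
    · rw [← h]; exact (hgood v).symm
  · intro v
    rw [sachsDeg_permGraph hfp]
    split <;> simp
  · intro u v huv hcond
    obtain ⟨h1, h2⟩ := hcond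
    have e1 : π u = π⁻¹ u := by
      by_contra hne
      rw [sachsDeg_permGraph hfp, if_neg hne] at h1
      omega
    have hπv : π v = u ∧ π⁻¹ v = u := by
      rcases permGraph_adj.mp huv with ⟨hne, h | h⟩
      · constructor
        · rw [← h, e1, Equiv.Perm.apply_inv_self]
        · rw [← h, Equiv.Perm.inv_apply_self]
      · refine ⟨h, ?_⟩
        have hv : v = π u := by rw [e1, ← h, Equiv.Perm.inv_apply_self]
        rw [hv, Equiv.Perm.inv_apply_self]
    have : {w | (permGraph π).Adj v w} = {u, u} := by
      rw [permGraph_nbr hfp v, hπv.1, hπv.2]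
    rw [sachsDeg_of_pair this, if_pos rfl] at h2
    omega

end SachsAux
namespace SachsAux

open Equiv Matrix

variable {n : ℕ} {G S : SimpleGraph (Fin n)}

lemma permGraph_eq (huniq : ∀ S' : SimpleGraph (Fin n), IsSachsSubgraph G S' → S' = S)
    {π : Equiv.Perm (Fin n)} (hgood : ∀ v, G.Adj v (π v)) : permGraph π = S :=
  huniq _ (isSachs_permGraph hgood)

lemma sgood_of_good (huniq : ∀ S' : SimpleGraph (Fin n), IsSachsSubgraph G S' → S' = S)
    {π : Equiv.Perm (Fin n)} (hgood : ∀ v, G.Adj v (π v)) :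
    ∀ v, S.Adj v (π v) := by
  intro v
  rw [← permGraph_eq huniq hgood]
  exact permGraph_adj.mpr ⟨G.ne_of_adj (hgood v), Or.inl rfl⟩

lemma good_of_sgood (hle : S ≤ G) {π : Equiv.Perm (Fin n)}
    (hπ : ∀ v, S.Adj v (π v)) : ∀ v, G.Adj v (π v) :=
  fun v => hle (hπ v)

lemma sgood_fp (hle : S ≤ G) {π : Equiv.Perm (Fin n)} (hπ : ∀ v, S.Adj v (π v)) :
    ∀ v, π v ≠ v := fun v => Ne.symm (S.ne_of_adj (hπ v))

/-- Complete description of `S`-adjacency from any compatible permutation. -/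
lemma adj_iff_of_sgood (hle : S ≤ G)
    (huniq : ∀ S' : SimpleGraph (Fin n), IsSachsSubgraph G S' → S' = S)
    {π : Equiv.Perm (Fin n)} (hπ : ∀ v, S.Adj v (π v)) (v w : Fin n) :
    S.Adj v w ↔ (w = π v ∨ w = π⁻¹ v) := by
  have h := permGraph_nbr (sgood_fp hle hπ) (π := π) v
  rw [permGraph_eq huniq (good_of_sgood hle hπ)] at h
  have := Set.ext_iff.mp h w
  simpa using this

lemma sachsDeg_eq_two_iff (hle : S ≤ G)
    (huniq : ∀ S' : SimpleGraph (Fin n), IsSachsSubgraph G S' → S' = S)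
    {π : Equiv.Perm (Fin n)} (hπ : ∀ v, S.Adj v (π v)) (v : Fin n) :
    sachsDeg S v = 2 ↔ π (π v) ≠ v := by
  have h := sachsDeg_permGraph (sgood_fp hle hπ) (π := π) v
  rw [permGraph_eq huniq (good_of_sgood hle hπ)] at h
  rw [h]
  have : π v = π⁻¹ v ↔ π (π v) = v := by
    constructor
    · intro hh; rw [hh, Equiv.Perm.apply_inv_self]
    · intro hh
      have : π⁻¹ (π (π v)) = π⁻¹ v := by rw [hh]
      rwa [Equiv.Perm.inv_apply_self] at this
  split
  · rename_i hc
    simp only [this] at hc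
    constructor
    · intro h12; omega
    · intro hne; exact absurd hc hne
  · rename_i hc
    simp only [this] at hc
    constructor
    · intro _; exact hc
    · intro _; rfl

lemma neighborFinset_card (S : SimpleGraph (Fin n)) (v : Fin n) :
    (S.neighborFinset v).card = sachsDeg S v := by
  rw [sachsDeg_eq_ncard, Set.ncard_eq_toFinset_card']
  rfl

lemma exists_sgood (hS : IsSachsSubgraph G S) :
    ∃ π : Equiv.Perm (Fin n), ∀ v, S.Adj v (π v) := by
  obtain ⟨hle, hdeg, hcross⟩ := hS
  set t : Fin n → Finset (Fin n) := fun v => S.neighborFinset v with ht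
  have hmemt : ∀ {u v : Fin n}, u ∈ t v ↔ S.Adj v u := by
    intro u v; simp [ht, SimpleGraph.mem_neighborFinset]
  have hcard : ∀ v, (t v).card = sachsDeg S v := fun v => neighborFinset_card S v
  have hall : ∀ W : Finset (Fin n), W.card ≤ (W.biUnion t).card := by
    intro W
    set W₁ := W.filter (fun v => sachsDeg S v = 1) with hW₁
    set W₂ := W.filter (fun v => ¬ sachsDeg S v = 1) with hW₂
    have hdeg2 : ∀ v ∈ W₂, sachsDeg S v = 2 := by
      intro v hv
      rcases hdeg v with h | h
      · exact absurd h (Finset.mem_filter.mp hv).2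
      · exact h
    have hdeg1 : ∀ v ∈ W₁, sachsDeg S v = 1 := fun v hv => (Finset.mem_filter.mp hv).2
    -- part 1
    have h1 : W₁.card ≤ (W₁.biUnion t).card := by
      set f : Fin n → Fin n := fun v =>
        if h : (t v).Nonempty then h.choose else v with hf
      have hfmem : ∀ v ∈ W₁, f v ∈ t v := by
        intro v hv
        have hne : (t v).Nonempty := by
          rw [← Finset.card_pos, hcard, hdeg1 v hv]; norm_num
        simp only [hf, dif_pos hne]
        exact hne.choose_spec
      apply Finset.card_le_card_of_injOn f
      · intro v hv; exact Finset.mem_biUnion.mpr ⟨v, hv, hfmem v hv⟩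
      · intro u hu v hv hfu
        have hadju : S.Adj u (f u) := hmemt.mp (hfmem u hu)
        have hadjv : S.Adj v (f v) := hmemt.mp (hfmem v hv)
        rw [hfu] at hadju
        -- deg (f v) = 1
        have hz : sachsDeg S (f v) = 1 := by
          rcases hdeg (f v) with h | h
          · exact h
          · exact absurd ⟨hdeg1 v hv, h⟩ (hcross v (f v) hadjv)
        have hsub : ({u, v} : Finset (Fin n)) ⊆ t (f v) := by
          intro z hz'
          rcases Finset.mem_insert.mp hz' with rfl | hz'
          · exact hmemt.mpr hadju.symm
          · rw [Finset.mem_singleton.mp hz']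
            exact hmemt.mpr hadjv.symm
        by_contra hne
        have : ({u, v} : Finset (Fin n)).card = 2 := Finset.card_pair hne
        have hle2 : ({u, v} : Finset (Fin n)).card ≤ 1 := by
          rw [← hz, ← hcard]; exact Finset.card_le_card hsub
        omega
    -- part 2
    have h2 : W₂.card ≤ (W₂.biUnion t).card := by
      have hdegB : ∀ u ∈ W₂.biUnion t, sachsDeg S u = 2 := by
        intro u hu
        obtain ⟨v, hv, hu'⟩ := Finset.mem_biUnion.mp hu
        rcases hdeg u with h | h
        · exact absurd ⟨h, hdeg2 v hv⟩ (hcross u v (hmemt.mp hu').symm)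
        · exact h
      have key : 2 * W₂.card ≤ 2 * (W₂.biUnion t).card := by
        calc 2 * W₂.card = ∑ v ∈ W₂, (t v).card := by
              rw [Finset.sum_congr rfl (fun v hv => by rw [hcard, hdeg2 v hv])]
              simp [Nat.mul_comm]
          _ = ∑ v ∈ W₂, ∑ u ∈ W₂.biUnion t, (if u ∈ t v then 1 else 0) := by
              apply Finset.sum_congr rfl
              intro v hv
              rw [Finset.sum_ite_mem, Finset.sum_const, smul_eq_mul, mul_one]
              congr 1
              rw [Finset.inter_eq_right.mpr]
              intro u hu
              exact Finset.mem_biUnion.mpr ⟨v, hv, hu⟩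
          _ = ∑ u ∈ W₂.biUnion t, ∑ v ∈ W₂, (if u ∈ t v then 1 else 0) :=
              Finset.sum_comm
          _ ≤ ∑ u ∈ W₂.biUnion t, 2 := by
              apply Finset.sum_le_sum
              intro u hu
              have : (W₂.filter (fun v => u ∈ t v)).card ≤ (t u).card := by
                apply Finset.card_le_card
                intro v hv
                exact hmemt.mpr ((hmemt.mp (Finset.mem_filter.mp hv).2).symm)
              have hb : (∑ v ∈ W₂, if u ∈ t v then 1 else 0)
                  = (W₂.filter (fun v => u ∈ t v)).card := by
                simp [Finset.sum_boole]
              rw [hb]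
              calc (W₂.filter (fun v => u ∈ t v)).card ≤ (t u).card := this
                _ = 2 := by rw [hcard, hdegB u hu]
          _ = 2 * (W₂.biUnion t).card := by rw [Finset.sum_const, smul_eq_mul, Nat.mul_comm]
      omega
    -- disjointness of the two unions
    have hdisjB : Disjoint (W₁.biUnion t) (W₂.biUnion t) := by
      rw [Finset.disjoint_left]
      intro u hu1 hu2
      obtain ⟨v₁, hv₁, hu₁'⟩ := Finset.mem_biUnion.mp hu1
      obtain ⟨v₂, hv₂, hu₂'⟩ := Finset.mem_biUnion.mp hu2
      have hdegu : sachsDeg S u = 1 := by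
        rcases hdeg u with h | h
        · exact h
        · exact absurd ⟨hdeg1 v₁ hv₁, h⟩ (hcross v₁ u (hmemt.mp hu₁'))
      exact hcross u v₂ (hmemt.mp hu₂').symm ⟨hdegu, hdeg2 v₂ hv₂⟩
    have hWsplit : W = W₁ ∪ W₂ := (Finset.filter_union_filter_not_eq _ W).symm
    have hdisjW : Disjoint W₁ W₂ := Finset.disjoint_filter_filter_not W W _
    calc W.card = W₁.card + W₂.card := by
          rw [hWsplit, Finset.card_union_of_disjoint hdisjW]
      _ ≤ (W₁.biUnion t).card + (W₂.biUnion t).card := Nat.add_le_add h1 h2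
      _ = ((W₁.biUnion t) ∪ (W₂.biUnion t)).card :=
          (Finset.card_union_of_disjoint hdisjB).symm
      _ = (W.biUnion t).card := by
          congr 1
          ext u
          simp only [Finset.mem_biUnion, Finset.mem_union]
          constructor
          · rintro (⟨v, hv, hu⟩ | ⟨v, hv, hu⟩)
            · exact ⟨v, Finset.filter_subset _ _ hv, hu⟩
            · exact ⟨v, Finset.filter_subset _ _ hv, hu⟩
          · rintro ⟨v, hv, hu⟩
            rcases Finset.mem_union.mp (by rw [← hWsplit]; exact hv) with h | h
            · exact Or.inl ⟨v, h, hu⟩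
            · exact Or.inr ⟨v, h, hu⟩
  obtain ⟨f, hinj, hft⟩ := (Finset.all_card_le_biUnion_card_iff_exists_injective t).mp hall
  refine ⟨Equiv.ofBijective f (Finite.injective_iff_bijective.mp hinj), ?_⟩
  intro v
  exact hmemt.mp (hft v)

end SachsAux
namespace SachsAux

open Equiv Matrix

variable {n : ℕ} {G S : SimpleGraph (Fin n)}

noncomputable def rev (u : Fin n) (π : Equiv.Perm (Fin n)) : Equiv.Perm (Fin n) :=
  π * (π.cycleOf u)⁻¹ * (π.cycleOf u)⁻¹

lemma sameCycle_apply_inv {π : Equiv.Perm (Fin n)} {u v : Fin n}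
    (h : π.SameCycle u v) : π.SameCycle u (π⁻¹ v) :=
  h.trans ⟨-1, by simp⟩

lemma rev_apply_of_sameCycle {π : Equiv.Perm (Fin n)} {u v : Fin n}
    (h : π.SameCycle u v) : rev u π v = π⁻¹ v := by
  unfold rev
  simp only [Equiv.Perm.mul_apply]
  rw [Equiv.Perm.cycleOf_inv]
  have hinner : (π⁻¹.cycleOf u) v = π⁻¹ v := by
    rw [Equiv.Perm.cycleOf_apply, if_pos (Equiv.Perm.sameCycle_inv.mpr h)]
  rw [hinner]
  have houter : (π⁻¹.cycleOf u) (π⁻¹ v) = π⁻¹ (π⁻¹ v) := by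
    rw [Equiv.Perm.cycleOf_apply,
      if_pos (Equiv.Perm.sameCycle_inv.mpr (sameCycle_apply_inv h))]
  rw [houter]
  exact Equiv.Perm.apply_inv_self π (π⁻¹ v)

lemma rev_apply_of_not_sameCycle {π : Equiv.Perm (Fin n)} {u v : Fin n}
    (h : ¬ π.SameCycle u v) : rev u π v = π v := by
  unfold rev
  simp only [Equiv.Perm.mul_apply]
  rw [Equiv.Perm.cycleOf_inv]
  have hinner : (π⁻¹.cycleOf u) v = v := by
    rw [Equiv.Perm.cycleOf_apply, if_neg (fun hc => h (Equiv.Perm.sameCycle_inv.mp hc))]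
  rw [hinner, hinner]

lemma rev_inv_apply_of_sameCycle {π : Equiv.Perm (Fin n)} {u v : Fin n}
    (h : π.SameCycle u v) : (rev u π)⁻¹ v = π v := by
  have h2 : rev u π (π v) = v := by
    rw [rev_apply_of_sameCycle (h.trans ⟨1, by simp⟩), Equiv.Perm.inv_apply_self]
  conv_lhs => rw [← h2]
  rw [Equiv.Perm.inv_apply_self]

lemma rev_zpow_apply {π : Equiv.Perm (Fin n)} (u : Fin n) :
    ∀ m : ℤ, ((rev u π) ^ m) u = (π ^ (-m)) u := by
  intro m
  induction m using Int.induction_on with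
  | zero => simp
  | succ k ih =>
      have h1 : ((rev u π) ^ ((k:ℤ) + 1)) u = rev u π (((rev u π) ^ (k:ℤ)) u) := by
        rw [add_comm, _root_.zpow_add, zpow_one, Equiv.Perm.mul_apply]
      have hsc : π.SameCycle u ((π ^ (-(k:ℤ))) u) := ⟨-(k:ℤ), rfl⟩
      rw [h1, ih, rev_apply_of_sameCycle hsc]
      have h2 : (π ^ (-((k:ℤ) + 1))) u = π⁻¹ ((π ^ (-(k:ℤ))) u) := by
        rw [show -((k:ℤ)+1) = -1 + -(k:ℤ) by ring, _root_.zpow_add,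
          Equiv.Perm.mul_apply, _root_.zpow_neg_one]
      rw [h2]
  | pred k ih =>
      have h1 : ((rev u π) ^ (-(k:ℤ) - 1)) u = (rev u π)⁻¹ (((rev u π) ^ (-(k:ℤ))) u) := by
        rw [show -(k:ℤ) - 1 = -1 + -(k:ℤ) by ring, _root_.zpow_add,
          Equiv.Perm.mul_apply, _root_.zpow_neg_one]
      have hsc : π.SameCycle u ((π ^ (-(-(k:ℤ)))) u) := ⟨-(-(k:ℤ)), rfl⟩
      rw [h1, ih, rev_inv_apply_of_sameCycle hsc]
      have h2 : (π ^ (-(-(k:ℤ) - 1))) u = π ((π ^ (-(-(k:ℤ)))) u) := by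
        rw [show -(-(k:ℤ) - 1) = 1 + (-(-(k:ℤ))) by ring, _root_.zpow_add,
          Equiv.Perm.mul_apply, zpow_one]
      rw [h2]

lemma sameCycle_rev_iff {π : Equiv.Perm (Fin n)} {u v : Fin n} :
    (rev u π).SameCycle u v ↔ π.SameCycle u v := by
  constructor
  · rintro ⟨m, hm⟩
    exact ⟨-m, by rw [← rev_zpow_apply u m, hm]⟩
  · rintro ⟨m, hm⟩
    exact ⟨-m, by rw [rev_zpow_apply u (-m), neg_neg, hm]⟩

lemma rev_rev {π : Equiv.Perm (Fin n)} (u : Fin n) : rev u (rev u π) = π := by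
  apply Equiv.ext
  intro v
  by_cases h : π.SameCycle u v
  · rw [rev_apply_of_sameCycle (sameCycle_rev_iff.mpr h)]
    exact rev_inv_apply_of_sameCycle h
  · rw [rev_apply_of_not_sameCycle (fun hc => h (sameCycle_rev_iff.mp hc))]
    exact rev_apply_of_not_sameCycle h

lemma rev_sgood {π : Equiv.Perm (Fin n)} (u : Fin n) (hπ : ∀ v, S.Adj v (π v)) :
    ∀ v, S.Adj v (rev u π v) := by
  intro v
  by_cases h : π.SameCycle u v
  · rw [rev_apply_of_sameCycle h]
    have := (hπ (π⁻¹ v)).symm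
    rwa [Equiv.Perm.apply_inv_self] at this
  · rw [rev_apply_of_not_sameCycle h]
    exact hπ v

lemma sign_rev (u : Fin n) (π : Equiv.Perm (Fin n)) :
    Equiv.Perm.sign (rev u π) = Equiv.Perm.sign π := by
  unfold rev
  rw [_root_.map_mul, _root_.map_mul, mul_assoc, Int.units_mul_self, mul_one]

lemma prod_rev {A : Matrix (Fin n) (Fin n) ℝ} (hsym : ∀ a b, A a b = A b a)
    (u : Fin n) (π : Equiv.Perm (Fin n)) :
    ∏ v, A (rev u π v) v = ∏ v, A (π v) v := by
  classical
  rw [← Finset.prod_filter_mul_prod_filter_not Finset.univ (fun v => π.SameCycle u v),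
      ← Finset.prod_filter_mul_prod_filter_not Finset.univ (fun v => π.SameCycle u v)
        (fun v => A (π v) v)]
  congr 1
  · -- on the cycle
    have h1 : ∀ v ∈ Finset.univ.filter (fun v => π.SameCycle u v),
        A (rev u π v) v = A (π⁻¹ v) v := by
      intro v hv
      rw [rev_apply_of_sameCycle (Finset.mem_filter.mp hv).2]
    rw [Finset.prod_congr rfl h1]
    apply Finset.prod_nbij' (fun v => π⁻¹ v) (fun v => π v)
    · intro a ha
      simp only [Finset.mem_filter, Finset.mem_univ, true_and] at ha ⊢
      exact sameCycle_apply_inv ha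
    · intro a ha
      simp only [Finset.mem_filter, Finset.mem_univ, true_and] at ha ⊢
      exact ha.trans ⟨1, by simp⟩
    · intro a _; exact Equiv.Perm.apply_inv_self π a
    · intro a _; exact Equiv.Perm.inv_apply_self π a
    · intro a ha
      rw [Equiv.Perm.apply_inv_self]
      exact hsym _ _
  · apply Finset.prod_congr rfl
    intro v hv
    rw [rev_apply_of_not_sameCycle (Finset.mem_filter.mp hv).2]

end SachsAux
namespace SachsAux

open Equiv Matrix

variable {n : ℕ} {G S : SimpleGraph (Fin n)}

noncomputable def wA (A : Matrix (Fin n) (Fin n) ℝ) (π : Equiv.Perm (Fin n)) : ℝ :=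
  ((Equiv.Perm.sign π : ℤ) : ℝ) * ∏ v, A (π v) v

lemma wA_rev {A : Matrix (Fin n) (Fin n) ℝ} (hsym : ∀ a b, A a b = A b a)
    (u : Fin n) (π : Equiv.Perm (Fin n)) : wA A (rev u π) = wA A π := by
  unfold wA
  rw [sign_rev, prod_rev hsym]

lemma weight_const (hle : S ≤ G)
    (huniq : ∀ S' : SimpleGraph (Fin n), IsSachsSubgraph G S' → S' = S)
    {A : Matrix (Fin n) (Fin n) ℝ} (hsym : ∀ a b, A a b = A b a) :
    ∀ π π' : Equiv.Perm (Fin n), (∀ v, S.Adj v (π v)) → (∀ v, S.Adj v (π' v)) →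
      wA A π = wA A π' := by
  suffices H : ∀ d : ℕ, ∀ π π' : Equiv.Perm (Fin n), (∀ v, S.Adj v (π v)) →
      (∀ v, S.Adj v (π' v)) →
      (Finset.univ.filter fun v => π v ≠ π' v).card = d → wA A π = wA A π' by
    intro π π' h h'
    exact H _ π π' h h' rfl
  intro d
  induction d using Nat.strong_induction_on with
  | _ d IH =>
    intro π π' hπ hπ' hcard
    by_cases h0 : (Finset.univ.filter fun v => π v ≠ π' v) = ∅
    · have : π = π' := by
        apply Equiv.ext; intro v
        by_contra hv
        have hmem : v ∈ Finset.univ.filter fun v => π v ≠ π' v := by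
          simp only [Finset.mem_filter, Finset.mem_univ, true_and]; exact hv
        rw [h0] at hmem
        simp at hmem
      rw [this]
    · obtain ⟨v₀, hv₀⟩ := Finset.nonempty_iff_ne_empty.mpr h0
      have hv₀' : π v₀ ≠ π' v₀ := (Finset.mem_filter.mp hv₀).2
      have hchain : ∀ k : ℕ, π ((π' ^ k) v₀) = π'⁻¹ ((π' ^ k) v₀) := by
        intro k
        induction k with
        | zero =>
          simp only [pow_zero, Equiv.Perm.one_apply]
          rcases (adj_iff_of_sgood hle huniq hπ' v₀ (π v₀)).mp (hπ v₀) with h | h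
          · exact absurd h hv₀'
          · exact h
        | succ k ihk =>
          set x := (π' ^ k) v₀ with hx
          have hxs : (π' ^ (k+1)) v₀ = π' x := by
            rw [pow_succ', Equiv.Perm.mul_apply]
          rw [hxs, Equiv.Perm.inv_apply_self]
          have hadj : S.Adj x (π' x) := hπ' x
          rcases (adj_iff_of_sgood hle huniq hπ x (π' x)).mp hadj with h | h
          · -- π' x = π x
            have h1 : π' x = π'⁻¹ x := by rw [h, ihk]
            have hax : S.Adj x (π⁻¹ x) := by
              have := (hπ (π⁻¹ x)).symm
              rwa [Equiv.Perm.apply_inv_self] at this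
            have h2 : π⁻¹ x = π' x := by
              rcases (adj_iff_of_sgood hle huniq hπ' x (π⁻¹ x)).mp hax with h2 | h2
              · exact h2
              · rw [h2, ← h1]
            have h3 : π x = π⁻¹ x := by rw [← h, h2]
            rw [h, h3, Equiv.Perm.apply_inv_self]
          · -- π' x = π⁻¹ x
            rw [h, Equiv.Perm.apply_inv_self]
      have hchain' : ∀ v, π'.SameCycle v₀ v → π v = π'⁻¹ v := by
        intro v hv
        obtain ⟨j, _, _, hj⟩ := Equiv.Perm.SameCycle.exists_pow_eq π' hv
        rw [← hj]
        exact hchain j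
      set π₁ := rev v₀ π' with hπ₁
      have hgood₁ : ∀ v, S.Adj v (π₁ v) := rev_sgood v₀ hπ'
      have hw₁ : wA A π₁ = wA A π' := wA_rev hsym v₀ π'
      have hπv₀ : π v₀ = π₁ v₀ := by
        rw [hπ₁, rev_apply_of_sameCycle (Equiv.Perm.SameCycle.refl π' v₀)]
        exact hchain' v₀ (Equiv.Perm.SameCycle.refl π' v₀)
      have hsub : (Finset.univ.filter fun v => π v ≠ π₁ v)
          ⊂ (Finset.univ.filter fun v => π v ≠ π' v) := by
        constructor
        · intro v hv
          simp only [Finset.mem_filter, Finset.mem_univ, true_and] at hv ⊢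
          by_cases hsc : π'.SameCycle v₀ v
          · have heq : π v = π₁ v := by
              rw [hπ₁, rev_apply_of_sameCycle hsc]
              exact hchain' v hsc
            exact absurd heq hv
          · intro he
            apply hv
            rw [hπ₁, rev_apply_of_not_sameCycle hsc]
            exact he
        · intro hcontra
          have hmem := hcontra hv₀
          simp only [Finset.mem_filter, Finset.mem_univ, true_and] at hmem
          exact hmem hπv₀
      have hlt := Finset.card_lt_card hsub
      rw [hcard] at hlt
      exact (IH _ hlt π π₁ hπ hgood₁ rfl).trans hw₁

end SachsAux
namespace SachsAux

open Equiv Matrix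

variable {n : ℕ} {G S : SimpleGraph (Fin n)}

lemma det_eq (hle : S ≤ G)
    (huniq : ∀ S' : SimpleGraph (Fin n), IsSachsSubgraph G S' → S' = S)
    {A : Matrix (Fin n) (Fin n) ℝ} (hsym : ∀ a b, A a b = A b a)
    (hA0 : ∀ a b, ¬ G.Adj a b → A a b = 0)
    {πs : Equiv.Perm (Fin n)} (hπs : ∀ v, S.Adj v (πs v)) :
    A.det = ((Finset.univ.filter
      (fun π : Equiv.Perm (Fin n) => ∀ v, S.Adj v (π v))).card : ℝ) * wA A πs := by
  classical
  rw [Matrix.det_apply]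
  have hterm : ∀ π : Equiv.Perm (Fin n),
      (Equiv.Perm.sign π • ∏ v, A (π v) v) = wA A π := by
    intro π
    rw [wA, Units.smul_def, zsmul_eq_mul]
  rw [Finset.sum_congr rfl (fun π _ => hterm π)]
  rw [← Finset.sum_filter_add_sum_filter_not Finset.univ
    (fun π : Equiv.Perm (Fin n) => ∀ v, S.Adj v (π v))]
  have h2 : ∑ π ∈ Finset.univ.filter
      (fun π : Equiv.Perm (Fin n) => ¬ ∀ v, S.Adj v (π v)), wA A π = 0 := by
    apply Finset.sum_eq_zero
    intro π hπ
    have hns := (Finset.mem_filter.mp hπ).2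
    have hng : ¬ ∀ v, G.Adj v (π v) := fun hg => hns (sgood_of_good huniq hg)
    push_neg at hng
    obtain ⟨v, hv⟩ := hng
    have hzero : A (π v) v = 0 := hA0 _ _ (fun ha => hv ha.symm)
    have hp0 : (∏ w, A (π w) w) = 0 := Finset.prod_eq_zero (Finset.mem_univ v) hzero
    rw [wA, hp0, mul_zero]
  rw [h2, add_zero]
  rw [Finset.sum_congr rfl (fun π hπ =>
    weight_const hle huniq hsym π πs (Finset.mem_filter.mp hπ).2 hπs)]
  rw [Finset.sum_const, nsmul_eq_mul]

lemma adjugate_key (hle : S ≤ G)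
    (huniq : ∀ S' : SimpleGraph (Fin n), IsSachsSubgraph G S' → S' = S)
    {A : Matrix (Fin n) (Fin n) ℝ} (hsym : ∀ a b, A a b = A b a)
    (hA0 : ∀ a b, ¬ G.Adj a b → A a b = 0)
    {πs : Equiv.Perm (Fin n)} (hπs : ∀ v, S.Adj v (πs v))
    (u v : Fin n) (huv : S.Adj u v) (hdu : sachsDeg S u = 2) :
    A.adjugate u v * A v u = A.det / 2 := by
  classical
  set Pset := Finset.univ.filter
    (fun π : Equiv.Perm (Fin n) => ∀ v, S.Adj v (π v)) with hPset
  set cls := Pset.filter (fun π => π u = v) with hcls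
  have hGuv : G.Adj u v := hle huv
  set B := A.updateRow v (Pi.single u 1) with hB
  -- each term of det B times A v u
  have hsplit : ∀ π : Equiv.Perm (Fin n),
      ((Equiv.Perm.sign π : ℤ) : ℝ) * (∏ k, B (π k) k) * A v u
        = if π ∈ cls then wA A π else 0 := by
    intro π
    by_cases h1 : π u = v
    · by_cases h2 : π ∈ Pset
      · have hmem : π ∈ cls := by
          rw [hcls]; exact Finset.mem_filter.mpr ⟨h2, h1⟩
        rw [if_pos hmem]
        have hBprod : (∏ k, B (π k) k)
            = 1 * ∏ k ∈ Finset.univ \ {u}, A (π k) k := by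
          rw [Finset.prod_eq_mul_prod_sdiff_singleton_of_mem (Finset.mem_univ u)
            (fun k => B (π k) k)]
          congr 1
          · rw [h1, hB, Matrix.updateRow_self, Pi.single_eq_same]
          · apply Finset.prod_congr rfl
            intro k hk
            have hkne : k ≠ u := by
              simp only [Finset.mem_sdiff, Finset.mem_singleton] at hk
              exact hk.2
            have : π k ≠ v := by
              intro hc
              exact hkne (π.injective (hc.trans h1.symm))
            rw [hB, Matrix.updateRow_ne this]
        have hAprod : (∏ k, A (π k) k)
            = A v u * ∏ k ∈ Finset.univ \ {u}, A (π k) k := by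
          rw [Finset.prod_eq_mul_prod_sdiff_singleton_of_mem (Finset.mem_univ u)
            (fun k => A (π k) k), h1]
        rw [hBprod, wA, hAprod]
        ring
      · -- π u = v but not compatible
        rw [if_neg (by rw [hcls]; intro hc; exact h2 (Finset.mem_filter.mp hc).1)]
        have hns : ¬ ∀ w, S.Adj w (π w) := by
          intro hall
          exact h2 (by rw [hPset]; exact Finset.mem_filter.mpr ⟨Finset.mem_univ _, hall⟩)
        have hng : ¬ ∀ w, G.Adj w (π w) := fun hg => hns (sgood_of_good huniq hg)
        push_neg at hng
        obtain ⟨k₀, hk₀⟩ := hng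
        have hk₀u : k₀ ≠ u := by
          intro hc
          rw [hc, h1] at hk₀
          exact hk₀ hGuv
        have hπk₀ : π k₀ ≠ v := by
          intro hc
          exact hk₀u (π.injective (hc.trans h1.symm))
        have hzero : B (π k₀) k₀ = 0 := by
          rw [hB, Matrix.updateRow_ne hπk₀]
          exact hA0 _ _ (fun ha => hk₀ ha.symm)
        have hp0 : (∏ k, B (π k) k) = 0 :=
          Finset.prod_eq_zero (Finset.mem_univ k₀) hzero
        rw [hp0]
        ring
    · rw [if_neg (by rw [hcls]; intro hc; exact h1 (Finset.mem_filter.mp hc).2)]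
      have hzero : B (π (π⁻¹ v)) (π⁻¹ v) = 0 := by
        rw [Equiv.Perm.apply_inv_self, hB, Matrix.updateRow_self]
        apply Pi.single_eq_of_ne
        intro hc
        apply h1
        rw [← hc, Equiv.Perm.apply_inv_self]
      have hp0 : (∏ k, B (π k) k) = 0 :=
        Finset.prod_eq_zero (Finset.mem_univ (π⁻¹ v)) hzero
      rw [hp0]
      ring
  have hBdet : B.det * A v u = (cls.card : ℝ) * wA A πs := by
    rw [Matrix.det_apply, Finset.sum_mul]
    have : ∀ π ∈ (Finset.univ : Finset (Equiv.Perm (Fin n))),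
        (Equiv.Perm.sign π • ∏ k, B (π k) k) * A v u
          = if π ∈ cls then wA A π else 0 := by
      intro π _
      rw [Units.smul_def, zsmul_eq_mul]
      exact hsplit π
    rw [Finset.sum_congr rfl this, Finset.sum_ite_mem, Finset.univ_inter]
    rw [Finset.sum_congr rfl (fun π hπ =>
      weight_const hle huniq hsym π πs (Finset.mem_filter.mp
        (Finset.mem_filter.mp hπ).1).2 hπs)]
    rw [Finset.sum_const, nsmul_eq_mul]
  -- now the doubling : Pset.card = 2 * cls.card
  have hcard2 : Pset.card = 2 * cls.card := by
    have hum : Pset.card = cls.card + (Pset.filter (fun π => ¬ π u = v)).card := by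
      rw [hcls]
      exact (Finset.card_filter_add_card_filter_not _).symm
    have hbij : cls.card = (Pset.filter (fun π => ¬ π u = v)).card := by
      apply Finset.card_bij' (fun π _ => rev u π) (fun π _ => rev u π)
      · -- maps cls into the other class
        intro π hπ
        have hπP : π ∈ Pset := (Finset.mem_filter.mp hπ).1
        have hπs : ∀ w, S.Adj w (π w) := (Finset.mem_filter.mp hπP).2
        have hπuv : π u = v := (Finset.mem_filter.mp hπ).2
        refine Finset.mem_filter.mpr ⟨?_, ?_⟩
        · rw [hPset]
          exact Finset.mem_filter.mpr ⟨Finset.mem_univ _, rev_sgood u hπs⟩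
        · rw [rev_apply_of_sameCycle (Equiv.Perm.SameCycle.refl π u)]
          intro hc
          have h2 : π v = u := by rw [← hc, Equiv.Perm.apply_inv_self]
          have := (sachsDeg_eq_two_iff hle huniq hπs u).mp hdu
          rw [hπuv, h2] at this
          exact this rfl
      · -- maps other class into cls
        intro π hπ
        have hπP : π ∈ Pset := (Finset.mem_filter.mp hπ).1
        have hπs : ∀ w, S.Adj w (π w) := (Finset.mem_filter.mp hπP).2
        have hπuv : ¬ π u = v := (Finset.mem_filter.mp hπ).2
        refine Finset.mem_filter.mpr ⟨?_, ?_⟩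
        · rw [hPset]
          exact Finset.mem_filter.mpr ⟨Finset.mem_univ _, rev_sgood u hπs⟩
        · rw [rev_apply_of_sameCycle (Equiv.Perm.SameCycle.refl π u)]
          rcases (adj_iff_of_sgood hle huniq hπs u v).mp huv with h | h
          · exact absurd h.symm hπuv
          · exact h.symm
      · intro π _; exact rev_rev u
      · intro π _; exact rev_rev u
    omega
  -- combine
  have hdet := det_eq hle huniq hsym hA0 hπs
  rw [Matrix.adjugate_apply, ← hB, hBdet, hdet, ← hPset, hcard2]
  push_cast
  ring

end SachsAux
namespace SachsAux

open Equiv Matrix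

variable {n : ℕ} {G S : SimpleGraph (Fin n)}

lemma period_odd (hle : S ≤ G)
    (huniq : ∀ S' : SimpleGraph (Fin n), IsSachsSubgraph G S' → S' = S)
    {πs : Equiv.Perm (Fin n)} (hπs : ∀ v, S.Adj v (πs v))
    {i : Fin n} (hi : sachsDeg S i = 2) :
    Function.minimalPeriod (⇑πs) i % 2 = 1 := by
  classical
  set m₀ := Function.minimalPeriod (⇑πs) i with hm₀
  have hper : (⇑πs)^[orderOf πs] i = i := by
    rw [← Equiv.Perm.coe_pow, pow_orderOf_eq_one]
    rfl
  have hpos : 0 < m₀ :=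
    Function.minimalPeriod_pos_of_mem_periodicPts ⟨orderOf πs, orderOf_pos πs, hper⟩
  by_contra hodd
  have heven : m₀ % 2 = 0 := by omega
  -- injectivity of indices
  have huniqidx : ∀ j k, j < m₀ → k < m₀ → (πs ^ j) i = (πs ^ k) i → j = k := by
    intro j k hj hk he
    have := Function.iterate_injOn_Iio_minimalPeriod (f := ⇑πs) (x := i)
    apply this (by exact hj) (by exact hk)
    simp only [← Equiv.Perm.coe_pow] at *
    exact he
  -- every cycle element is an iterate with small index
  have hexand : ∀ x, πs.SameCycle i x → ∃ j, j < m₀ ∧ (πs ^ j) i = x := by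
    intro x hx
    obtain ⟨j, _, _, hj⟩ := Equiv.Perm.SameCycle.exists_pow_eq πs hx
    refine ⟨j % m₀, Nat.mod_lt _ hpos, ?_⟩
    rw [Equiv.Perm.coe_pow, hm₀, Function.iterate_mod_minimalPeriod_eq,
      ← Equiv.Perm.coe_pow]
    exact hj
  set idx : Fin n → ℕ := fun x =>
    if h : πs.SameCycle i x then (hexand x h).choose else 0 with hidxdef
  have hidx : ∀ x (h : πs.SameCycle i x), idx x < m₀ ∧ (πs ^ (idx x)) i = x := by
    intro x h
    simp only [hidxdef, dif_pos h]
    exact (hexand x h).choose_spec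
  have hSCπ : ∀ x, πs.SameCycle i (πs x) ↔ πs.SameCycle i x := by
    intro x
    constructor
    · intro h; exact h.trans ⟨-1, by simp⟩
    · intro h; exact h.trans ⟨1, by simp⟩
  have hSCπinv : ∀ x, πs.SameCycle i (πs⁻¹ x) ↔ πs.SameCycle i x := by
    intro x
    constructor
    · intro h; exact h.trans ⟨1, by simp⟩
    · intro h; exact h.trans ⟨-1, by simp⟩
  have hidx_succ : ∀ x, πs.SameCycle i x → idx x % 2 = 0 → idx (πs x) = idx x + 1 := by
    intro x hx hev
    have hlt : idx x + 1 < m₀ := by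
      have h1 := (hidx x hx).1
      omega
    have hval : (πs ^ (idx x + 1)) i = πs x := by
      rw [pow_succ', Equiv.Perm.mul_apply, (hidx x hx).2]
    exact huniqidx _ _ (hidx (πs x) ((hSCπ x).mpr hx)).1 hlt
      (by rw [(hidx (πs x) ((hSCπ x).mpr hx)).2, hval])
  have hidx_pred : ∀ x, πs.SameCycle i x → idx x % 2 = 1 →
      idx (πs⁻¹ x) = idx x - 1 := by
    intro x hx hodd'
    have hge : 1 ≤ idx x := by omega
    have hval : (πs ^ (idx x - 1)) i = πs⁻¹ x := by
      have h2 : πs ((πs ^ (idx x - 1)) i) = x := by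
        rw [← Equiv.Perm.mul_apply, ← pow_succ']
        rw [Nat.sub_add_cancel hge]
        exact (hidx x hx).2
      have := congrArg (⇑πs⁻¹) h2
      simpa using this
    have hlt : idx x - 1 < m₀ := by
      have h1 := (hidx x hx).1
      omega
    exact huniqidx _ _ (hidx (πs⁻¹ x) ((hSCπinv x).mpr hx)).1 hlt
      (by rw [(hidx (πs⁻¹ x) ((hSCπinv x).mpr hx)).2, hval])
  set f : Fin n → Fin n := fun x =>
    if πs.SameCycle i x then (if idx x % 2 = 0 then πs x else πs⁻¹ x) else πs x
    with hfdef
  have hf_even : ∀ x, πs.SameCycle i x → idx x % 2 = 0 → f x = πs x := by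
    intro x hx hev; simp only [hfdef, if_pos hx, if_pos hev]
  have hf_odd : ∀ x, πs.SameCycle i x → idx x % 2 = 1 → f x = πs⁻¹ x := by
    intro x hx ho; simp only [hfdef, if_pos hx]
    rw [if_neg (by omega)]
  have hf_out : ∀ x, ¬ πs.SameCycle i x → f x = πs x := by
    intro x hx; simp only [hfdef, if_neg hx]
  have hfSC : ∀ x, πs.SameCycle i x → πs.SameCycle i (f x) := by
    intro x hx
    by_cases hev : idx x % 2 = 0
    · rw [hf_even x hx hev]; exact (hSCπ x).mpr hx
    · rw [hf_odd x hx (by omega)]; exact (hSCπinv x).mpr hx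
  have hff : ∀ x, πs.SameCycle i x → f (f x) = x := by
    intro x hx
    by_cases hev : idx x % 2 = 0
    · rw [hf_even x hx hev]
      have hsc' : πs.SameCycle i (πs x) := (hSCπ x).mpr hx
      have : idx (πs x) = idx x + 1 := hidx_succ x hx hev
      rw [hf_odd (πs x) hsc' (by omega), Equiv.Perm.inv_apply_self]
    · have ho : idx x % 2 = 1 := by omega
      rw [hf_odd x hx ho]
      have hsc' : πs.SameCycle i (πs⁻¹ x) := (hSCπinv x).mpr hx
      have hpred : idx (πs⁻¹ x) = idx x - 1 := hidx_pred x hx ho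
      rw [hf_even (πs⁻¹ x) hsc' (by omega), Equiv.Perm.apply_inv_self]
  have hinj : Function.Injective f := by
    intro a b hab
    by_cases ha : πs.SameCycle i a <;> by_cases hb : πs.SameCycle i b
    · rw [← hff a ha, hab, hff b hb]
    · exfalso
      apply hb
      have := hfSC a ha
      rw [hab, hf_out b hb] at this
      exact (hSCπ b).mp this
    · exfalso
      apply ha
      have := hfSC b hb
      rw [← hab, hf_out a ha] at this
      exact (hSCπ a).mp this
    · rw [hf_out a ha, hf_out b hb] at hab
      exact πs.injective hab
  set ρ : Equiv.Perm (Fin n) :=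
    Equiv.ofBijective f (Finite.injective_iff_bijective.mp hinj) with hρdef
  have hρ : ∀ x, ρ x = f x := fun x => rfl
  have hgood : ∀ x, G.Adj x (ρ x) := by
    intro x
    rw [hρ]
    by_cases hx : πs.SameCycle i x
    · by_cases hev : idx x % 2 = 0
      · rw [hf_even x hx hev]; exact hle (hπs x)
      · rw [hf_odd x hx (by omega)]
        have := (hπs (πs⁻¹ x)).symm
        rw [Equiv.Perm.apply_inv_self] at this
        exact hle this
    · rw [hf_out x hx]; exact hle (hπs x)
  have hPG : permGraph ρ = S := permGraph_eq huniq hgood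
  have hfp : ∀ v, ρ v ≠ v := fun v => Ne.symm (G.ne_of_adj (hgood v))
  -- index of i is 0
  have hSCi : πs.SameCycle i i := Equiv.Perm.SameCycle.refl _ _
  have hidx0 : idx i = 0 := by
    apply huniqidx _ _ (hidx i hSCi).1 hpos
    rw [(hidx i hSCi).2, pow_zero]
    rfl
  have hρρi : ρ (ρ i) = i := by
    rw [hρ, hρ]
    exact hff i hSCi
  have hρinv : ρ⁻¹ i = ρ i := by
    have := congrArg (⇑ρ⁻¹) hρρi
    rw [Equiv.Perm.inv_apply_self] at this
    rw [this]
  have hdeg1 : sachsDeg (permGraph ρ) i = 1 := by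
    rw [sachsDeg_permGraph hfp, if_pos hρinv.symm]
  rw [hPG, hi] at hdeg1
  omega

end SachsAux
namespace SachsAux

open Equiv Matrix

variable {n : ℕ} {G S : SimpleGraph (Fin n)}

lemma minor_det_zero (hle : S ≤ G)
    (huniq : ∀ S' : SimpleGraph (Fin n), IsSachsSubgraph G S' → S' = S)
    {A : Matrix (Fin n) (Fin n) ℝ} (hA0 : ∀ a b, ¬ G.Adj a b → A a b = 0)
    (u v : Fin n) (huv : S.Adj u v) (hdu : sachsDeg S u = 2) :
    Matrix.det (Matrix.of (fun p q : {w : Fin n // w ≠ u ∧ w ≠ v} => A ↑p ↑q)) = 0 := by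
  classical
  rw [Matrix.det_apply]
  apply Finset.sum_eq_zero
  intro ω _
  by_cases hall : ∀ p : {w : Fin n // w ≠ u ∧ w ≠ v}, G.Adj ↑(ω p) ↑p
  · exfalso
    have hne : u ≠ v := S.ne_of_adj huv
    set ρ : Equiv.Perm (Fin n) := Equiv.swap u v * Equiv.Perm.ofSubtype ω with hρdef
    have hρu : ρ u = v := by
      rw [hρdef, Equiv.Perm.mul_apply,
        Equiv.Perm.ofSubtype_apply_of_not_mem ω (by simp)]
      exact Equiv.swap_apply_left u v
    have hρv : ρ v = u := by
      rw [hρdef, Equiv.Perm.mul_apply,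
        Equiv.Perm.ofSubtype_apply_of_not_mem ω (by simp)]
      exact Equiv.swap_apply_right u v
    have hρs : ∀ p : {w : Fin n // w ≠ u ∧ w ≠ v}, ρ ↑p = ↑(ω p) := by
      intro p
      rw [hρdef, Equiv.Perm.mul_apply, Equiv.Perm.ofSubtype_apply_of_mem ω p.2]
      rw [Subtype.coe_eta]
      exact Equiv.swap_apply_of_ne_of_ne (ω p).2.1 (ω p).2.2
    have hgood : ∀ x, G.Adj x (ρ x) := by
      intro x
      by_cases hxu : x = u
      · subst hxu; rw [hρu]; exact hle huv
      by_cases hxv : x = v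
      · subst hxv; rw [hρv]; exact (hle huv).symm
      · have := hρs ⟨x, hxu, hxv⟩
        simp only [Subtype.coe_mk] at this
        rw [this]
        exact (hall ⟨x, hxu, hxv⟩).symm
    have hPG := permGraph_eq huniq hgood
    have hfp : ∀ w, ρ w ≠ w := fun w => Ne.symm (G.ne_of_adj (hgood w))
    have hρinv : ρ⁻¹ u = v := by
      rw [← hρv, Equiv.Perm.inv_apply_self]
    have hdegu : sachsDeg (permGraph ρ) u = 1 := by
      rw [sachsDeg_permGraph hfp, if_pos (by rw [hρu, hρinv])]
    rw [hPG, hdu] at hdegu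
    omega
  · push_neg at hall
    obtain ⟨p₀, hp₀⟩ := hall
    have hzero : (Matrix.of fun p q : {w : Fin n // w ≠ u ∧ w ≠ v} => A ↑p ↑q) (ω p₀) p₀ = 0 :=
      hA0 _ _ hp₀
    have hp0 : (∏ p, (Matrix.of fun p q : {w : Fin n // w ≠ u ∧ w ≠ v} => A ↑p ↑q) (ω p) p) = 0 :=
      Finset.prod_eq_zero (Finset.mem_univ p₀) hzero
    rw [hp0, smul_zero]

end SachsAux
open SachsAux

/-- If a simple graph `G` has a unique Sachs subgraph `S` which is not a
perfect matching (i.e. `S` contains a cycle, so some vertex has degree `2` in `S`),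
then there is a vertex `i` such that for every signing `σ` of `G`, the diagonal entry
`(A⁻¹)_{ii}` of the inverse adjacency matrix has absolute value `1/2`; in particular the
inverse of `(G,σ)` is neither integral nor simple. -/
theorem unique_sachs_with_cycle_gives_half_diagonal
    {n : ℕ} (G : SimpleGraph (Fin n))
    (S : SimpleGraph (Fin n)) (hS : IsSachsSubgraph G S)
    (huniq : ∀ S' : SimpleGraph (Fin n), IsSachsSubgraph G S' → S' = S)
    (hcyc : ∃ v, sachsDeg S v = 2) :
    ∃ i : Fin n, ∀ (σ : Fin n → Fin n → ℝ), (∀ a b, σ a b = σ b a) →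
      (∀ a b, G.Adj a b → σ a b = 1 ∨ σ a b = -1) →
      ∀ A : Matrix (Fin n) (Fin n) ℝ,
        A = Matrix.of (fun a b => if G.Adj a b then σ a b else 0) →
        |A⁻¹ i i| = 1 / 2 ∧
        ¬(∀ a b, ∃ z : ℤ, A⁻¹ a b = (z : ℝ)) ∧ ¬(∀ a, A⁻¹ a a = 0) := by
  classical
  obtain ⟨i, hi⟩ := hcyc
  refine ⟨i, ?_⟩
  intro σ hσsym hσpm A hA
  have hle := hS.1
  have hAdef : ∀ a b, A a b = if G.Adj a b then σ a b else 0 := by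
    intro a b; rw [hA]; rfl
  have hA0 : ∀ a b, ¬ G.Adj a b → A a b = 0 := fun a b h => by
    rw [hAdef, if_neg h]
  have hAadj : ∀ a b, G.Adj a b → A a b = σ a b := fun a b h => by
    rw [hAdef, if_pos h]
  have hsym : ∀ a b, A a b = A b a := by
    intro a b
    by_cases h : G.Adj a b
    · rw [hAadj a b h, hAadj b a h.symm, hσsym]
    · rw [hA0 a b h, hA0 b a (fun hc => h hc.symm)]
  have hAA : ∀ a b, G.Adj a b → A a b * A b a = 1 := by
    intro a b h
    rw [hAadj a b h, hAadj b a h.symm, ← hσsym a b]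
    rcases hσpm a b h with h1 | h1 <;> rw [h1] <;> norm_num
  obtain ⟨πs, hπs⟩ := exists_sgood hS
  have hw : wA A πs ≠ 0 := by
    rw [wA]
    apply mul_ne_zero
    · rcases Int.units_eq_one_or (Equiv.Perm.sign πs) with h | h <;> rw [h] <;> norm_num
    · rw [Finset.prod_ne_zero_iff]
      intro v _
      have hadj : G.Adj (πs v) v := (hle (hπs v)).symm
      rw [hAadj _ _ hadj]
      rcases hσpm _ _ hadj with h | h <;> rw [h] <;> norm_num
  have hdet := det_eq hle huniq hsym hA0 hπs
  have hcardpos : 0 < (Finset.univ.filter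
      (fun π : Equiv.Perm (Fin n) => ∀ v, S.Adj v (π v))).card := by
    apply Finset.card_pos.mpr
    exact ⟨πs, Finset.mem_filter.mpr ⟨Finset.mem_univ _, hπs⟩⟩
  have hdet0 : A.det ≠ 0 := by
    rw [hdet]
    exact mul_ne_zero (Nat.cast_ne_zero.mpr (by omega)) hw
  have hunit : IsUnit A.det := isUnit_iff_ne_zero.mpr hdet0
  have hhalf : ∀ u v, S.Adj u v → sachsDeg S u = 2 → A⁻¹ u v * A v u = 1/2 := by
    intro u v huv hdu
    have hadjkey := adjugate_key hle huniq hsym hA0 hπs u v huv hdu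
    rw [Matrix.inv_def, Matrix.smul_apply, smul_eq_mul, Ring.inverse_eq_inv,
      mul_assoc, hadjkey]
    field_simp
  have hinv4 : ∀ u v, S.Adj u v → sachsDeg S u = 2 → sachsDeg S v = 2 →
      A⁻¹ u v * A⁻¹ v u = 1/4 := by
    intro u v huv hdu hdv
    have h1 := hhalf u v huv hdu
    have h2 := hhalf v u huv.symm hdv
    have h3 : A u v * A v u = 1 := hAA u v (hle huv)
    have key : (A⁻¹ u v * A v u) * (A⁻¹ v u * A u v) = 1/4 := by
      rw [h1, h2]; norm_num
    have key2 : A⁻¹ u v * A⁻¹ v u * (A v u * A u v) = 1/4 := by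
      rw [← key]; ring
    rw [mul_comm (A v u) (A u v), h3, mul_one] at key2
    exact key2
  have hdiag : ∀ u v, S.Adj u v → sachsDeg S u = 2 → sachsDeg S v = 2 →
      A⁻¹ u u * A⁻¹ v v = 1/4 := by
    intro u v huv hdu hdv
    have hne : u ≠ v := S.ne_of_adj huv
    have hdetC := minor_det_zero hle huniq hA0 u v huv hdu
    obtain ⟨x, hx0, hxker⟩ := Matrix.exists_mulVec_eq_zero_iff.mpr hdetC
    set xe : Fin n → ℝ := fun w => if h : w ≠ u ∧ w ≠ v then x ⟨w, h⟩ else 0 with hxe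
    have hxe0 : xe ≠ 0 := by
      intro hc
      apply hx0
      funext p
      have hcp := congrFun hc (↑p : Fin n)
      simp only [hxe, Pi.zero_apply] at hcp
      rw [dif_pos p.2, Subtype.coe_eta] at hcp
      exact hcp
    set y := A.mulVec xe with hy
    have hysupp : ∀ w, w ≠ u ∧ w ≠ v → y w = 0 := by
      intro w hw
      have hentry := congrFun hxker ⟨w, hw⟩
      simp only [Matrix.mulVec, dotProduct, Pi.zero_apply, Matrix.of_apply] at hentry
      rw [hy]
      simp only [Matrix.mulVec, dotProduct]
      rw [← Finset.sum_filter_add_sum_filter_not Finset.univ (fun z => z ≠ u ∧ z ≠ v)]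
      have h2 : ∑ z ∈ Finset.univ.filter (fun z : Fin n => ¬(z ≠ u ∧ z ≠ v)), A w z * xe z = 0 := by
        apply Finset.sum_eq_zero
        intro z hz
        have hzz := (Finset.mem_filter.mp hz).2
        simp only [hxe]
        rw [dif_neg hzz, mul_zero]
      rw [h2, add_zero]
      have hconv : ∑ z ∈ Finset.univ.filter (fun z : Fin n => z ≠ u ∧ z ≠ v), A w z * xe z
          = ∑ q : {z : Fin n // z ≠ u ∧ z ≠ v}, A w ↑q * xe ↑q :=
        Finset.sum_subtype _ (fun z => by simp) _
      rw [hconv, ← hentry]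
      apply Finset.sum_congr rfl
      intro q _
      simp only [hxe]
      rw [dif_pos q.2, Subtype.coe_eta]
    have hxeA : xe = A⁻¹.mulVec y := by
      rw [hy, Matrix.mulVec_mulVec, Matrix.nonsing_inv_mul A hunit, Matrix.one_mulVec]
    have hy0 : ¬ (y u = 0 ∧ y v = 0) := by
      rintro ⟨h1, h2⟩
      apply hxe0
      have hyzero : y = 0 := by
        funext w
        by_cases hwu : w = u
        · rw [hwu, h1]; rfl
        by_cases hwv : w = v
        · rw [hwv, h2]; rfl
        · rw [hysupp w ⟨hwu, hwv⟩]; rfl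
      rw [hxeA, hyzero, Matrix.mulVec_zero]
    have hrow : ∀ w, (A⁻¹.mulVec y) w = A⁻¹ w u * y u + A⁻¹ w v * y v := by
      intro w
      simp only [Matrix.mulVec, dotProduct]
      rw [← Finset.sum_subset (Finset.subset_univ ({u, v} : Finset (Fin n)))]
      · rw [Finset.sum_pair hne]
      · intro z _ hz
        simp only [Finset.mem_insert, Finset.mem_singleton] at hz
        push_neg at hz
        rw [hysupp z hz, mul_zero]
    have hxebd : ∀ w, w = u ∨ w = v → xe w = 0 := by
      intro w hw
      simp only [hxe]
      rw [dif_neg]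
      intro hcon
      rcases hw with rfl | rfl
      · exact hcon.1 rfl
      · exact hcon.2 rfl
    have h1 : A⁻¹ u u * y u + A⁻¹ u v * y v = 0 := by
      rw [← hrow u, ← hxeA]
      exact hxebd u (Or.inl rfl)
    have h2 : A⁻¹ v u * y u + A⁻¹ v v * y v = 0 := by
      rw [← hrow v, ← hxeA]
      exact hxebd v (Or.inr rfl)
    have hd2 : A⁻¹ u u * A⁻¹ v v - A⁻¹ u v * A⁻¹ v u = 0 := by
      rcases not_and_or.mp hy0 with hyu | hyv
      · have hcomb : (A⁻¹ u u * A⁻¹ v v - A⁻¹ u v * A⁻¹ v u) * y u = 0 := by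
          linear_combination A⁻¹ v v * h1 - A⁻¹ u v * h2
        rcases mul_eq_zero.mp hcomb with h | h
        · exact h
        · exact absurd h hyu
      · have hcomb : (A⁻¹ u u * A⁻¹ v v - A⁻¹ u v * A⁻¹ v u) * y v = 0 := by
          linear_combination A⁻¹ u u * h2 - A⁻¹ v u * h1
        rcases mul_eq_zero.mp hcomb with h | h
        · exact h
        · exact absurd h hyv
    rw [sub_eq_zero] at hd2
    rw [hd2]
    exact hinv4 u v huv hdu hdv
  -- the cycle through i
  set c : ℕ → Fin n := fun j => (πs ^ j) i with hc
  have hcdeg : ∀ j, sachsDeg S (c j) = 2 := by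
    intro j
    rw [sachsDeg_eq_two_iff hle huniq hπs]
    intro hcon
    have hii := (sachsDeg_eq_two_iff hle huniq hπs i).mp hi
    apply hii
    have hcomm : πs * πs * πs ^ j = πs ^ j * (πs * πs) := by
      rw [show πs * πs = πs ^ 2 by rw [pow_two], ← pow_add, ← pow_add, add_comm]
    have hlhs : πs (πs ((πs ^ j) i)) = (πs ^ j) (πs (πs i)) := by
      rw [← Equiv.Perm.mul_apply, ← Equiv.Perm.mul_apply, hcomm,
        Equiv.Perm.mul_apply, Equiv.Perm.mul_apply]
    have hcon' : (πs ^ j) (πs (πs i)) = (πs ^ j) i := by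
      rw [← hlhs]
      exact hcon
    exact (πs ^ j).injective hcon'
  have hcadj : ∀ j, S.Adj (c j) (c (j+1)) := by
    intro j
    have hcc : c (j+1) = πs (c j) := by
      simp only [hc]
      rw [pow_succ', Equiv.Perm.mul_apply]
    rw [hcc]
    exact hπs (c j)
  set yd : ℕ → ℝ := fun j => A⁻¹ (c j) (c j) with hyd
  have hyrel : ∀ j, yd j * yd (j+1) = 1/4 := fun j =>
    hdiag (c j) (c (j+1)) (hcadj j) (hcdeg j) (hcdeg (j+1))
  have hynz : ∀ j, yd j ≠ 0 := by
    intro j hj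
    have := hyrel j
    rw [hj, zero_mul] at this
    norm_num at this
  have hstep2 : ∀ j, yd (j+2) = yd j := by
    intro j
    have e1 := hyrel j
    have e2 := hyrel (j+1)
    rw [show j+1+1 = j+2 by ring] at e2
    have e3 : yd (j+2) * yd (j+1) = yd j * yd (j+1) := by
      rw [e1, ← e2]; ring
    exact mul_right_cancel₀ (hynz (j+1)) e3
  have heven : ∀ k j, yd (j + 2*k) = yd j := by
    intro k
    induction k with
    | zero => intro j; norm_num
    | succ k ihk =>
        intro j
        rw [show j + 2*(k+1) = (j + 2*k) + 2 by ring, hstep2, ihk]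
  have hm := period_odd hle huniq hπs hi
  set m₀ := Function.minimalPeriod (⇑πs) i with hm₀
  have hcm : c m₀ = i := by
    simp only [hc]
    have hit := Function.iterate_minimalPeriod (f := ⇑πs) (x := i)
    rw [← Equiv.Perm.coe_pow] at hit
    exact hit
  have hc0 : c 0 = i := by simp [hc]
  have hy01 : yd 0 = yd 1 := by
    have hm1 : m₀ = 1 + 2 * (m₀ / 2) := by omega
    have hym : yd m₀ = yd 1 := by
      rw [hm1]
      exact heven (m₀/2) 1
    rw [← hym]
    simp only [hyd]
    rw [hcm, hc0]
  have hsq : yd 0 * yd 0 = 1/4 := by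
    have := hyrel 0
    rw [← hy01] at this
    exact this
  have habs : |A⁻¹ i i| = 1/2 := by
    have hAii : A⁻¹ i i = yd 0 := by
      simp only [hyd]
      rw [hc0]
    rw [hAii]
    have hfact : (yd 0 - 1/2) * (yd 0 + 1/2) = 0 := by linear_combination hsq
    rcases mul_eq_zero.mp hfact with h | h
    · rw [show yd 0 = 1/2 by linarith]
      norm_num
    · rw [show yd 0 = -(1/2) by linarith]
      norm_num
  refine ⟨habs, ?_, ?_⟩
  · rintro hint
    obtain ⟨z, hz⟩ := hint i i
    rw [hz] at habs
    have h2z : ((2*z : ℤ) : ℝ) = 1 ∨ ((2*z : ℤ) : ℝ) = -1 := by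
      rcases (abs_eq (by norm_num : (0:ℝ) ≤ 1/2)).mp habs with h | h
      · left; push_cast; linarith
      · right; push_cast; linarith
    rcases h2z with h | h
    · have : (2*z : ℤ) = 1 := by exact_mod_cast h
      omega
    · have : (2*z : ℤ) = -1 := by exact_mod_cast h
      omega
  · intro hzero
    rw [hzero i] at habs
    norm_num at habs
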